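/- For every natural number W and every integer ℓ ≥ (W+3)²: if A is a bipartite graph with k(A) ≤ 2ℓ + W and e(A) ≥ ℓ², then some connected component B of A satisfies e(B) ≥ ℓ² − e*(W+2) and v(B) ≤ 2ℓ + W + 1. -/

import Mathlib

noncomputable section

/-- A bipartite graph: two disjoint finite vertex sets `L`, `R`
and a set of edges `E ⊆ L × R`. -/
structure BipGraph (V : Type) [DecidableEq V] where
  L : Finset V
  R : Finset V
  disj : Disjoint L R
  E : Finset (V × V)
  E_sub : E ⊆ L ×ˢ R

namespace BipGraph

variable {V : Type} [DecidableEq V]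

/-- the vertex set -/
def verts (A : BipGraph V) : Finset V := A.L ∪ A.R

/-- `v A` is the number of vertices of `A` -/
def v (A : BipGraph V) : ℕ := A.verts.card

/-- `e A` is the number of edges of `A` -/
def e (A : BipGraph V) : ℕ := A.E.card

/-- the underlying simple graph on the vertex set of `A` -/
def graph (A : BipGraph V) : SimpleGraph {x : V // x ∈ A.verts} where
  Adj x y := (x.1, y.1) ∈ A.E ∨ (y.1, x.1) ∈ A.E
  symm := by
    constructor
    intro x y h
    exact h.symm
  loopless := by
    constructor
    intro x h
    have hx : (x.1, x.1) ∈ A.E := by rcases h with h | h <;> exact h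
    have hmem := A.E_sub hx
    rw [Finset.mem_product] at hmem
    exact Finset.disjoint_left.mp A.disj hmem.1 hmem.2

/-- `CC A` is the number of connected components of `A` (isolated vertices count). -/
def CC (A : BipGraph V) : ℕ := Nat.card A.graph.ConnectedComponent

/-- `k A = v A - CC A` -/
def k (A : BipGraph V) : ℕ := A.v - A.CC

/-- `A` is complete if every left-right pair is an edge. -/
def Complete (A : BipGraph V) : Prop := A.E = A.L ×ˢ A.R

/-- `A` is balanced if its parts differ in size by at most one. -/
def Balanced (A : BipGraph V) : Prop := ((A.L.card : ℤ) - (A.R.card : ℤ)).natAbs ≤ 1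

/-- `A` is null if it has no edges. -/
def Null (A : BipGraph V) : Prop := A.E = ∅

/-- the induced subgraph of `A` on a set `S` of vertices: the vertices of `A`
belonging to `S`, together with all edges of `A` between them. -/
def induce (A : BipGraph V) (S : Finset V) : BipGraph V where
  L := A.L ∩ S
  R := A.R ∩ S
  disj := A.disj.mono Finset.inter_subset_left Finset.inter_subset_left
  E := A.E.filter (fun p => p.1 ∈ S ∧ p.2 ∈ S)
  E_sub := by
    intro p hp
    rw [Finset.mem_filter] at hp
    have hmem := A.E_sub hp.1
    rw [Finset.mem_product] at hmem ⊢
    exact ⟨Finset.mem_inter.mpr ⟨hmem.1, hp.2.1⟩, Finset.mem_inter.mpr ⟨hmem.2, hp.2.2⟩⟩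

/-- the degree of a vertex: the number of edges incident to it -/
def deg (A : BipGraph V) (x : V) : ℕ :=
  (A.E.filter (fun p => p.1 = x ∨ p.2 = x)).card

/-- `A` is almost `ℓ`-complete: the two parts have sizes within `0.01 * ℓ` of `ℓ`,
and every vertex has degree at least `0.9 * ℓ`. -/
def AlmostComplete (ℓ : ℕ) (A : BipGraph V) : Prop :=
  |(A.L.card : ℝ) - (ℓ : ℝ)| ≤ 0.01 * ℓ ∧ |(A.R.card : ℝ) - (ℓ : ℝ)| ≤ 0.01 * ℓ ∧
  ∀ x ∈ A.verts, (0.9 : ℝ) * ℓ ≤ (A.deg x : ℝ)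

/-- the disjoint union of two vertex-disjoint bipartite graphs -/
def disjUnion (A B : BipGraph V) (h : Disjoint A.verts B.verts) : BipGraph V where
  L := A.L ∪ B.L
  R := A.R ∪ B.R
  disj := by
    have h1 : Disjoint A.L B.R := h.mono Finset.subset_union_left Finset.subset_union_right
    have h2 : Disjoint B.L A.R := h.symm.mono Finset.subset_union_left Finset.subset_union_right
    rw [Finset.disjoint_union_left, Finset.disjoint_union_right, Finset.disjoint_union_right]
    exact ⟨⟨A.disj, h1⟩, ⟨h2, B.disj⟩⟩
  E := A.E ∪ B.E
  E_sub := by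
    intro p hp
    rw [Finset.mem_union] at hp
    rw [Finset.mem_product]
    rcases hp with hp | hp
    · have := A.E_sub hp; rw [Finset.mem_product] at this
      exact ⟨Finset.mem_union_left _ this.1, Finset.mem_union_left _ this.2⟩
    · have := B.E_sub hp; rw [Finset.mem_product] at this
      exact ⟨Finset.mem_union_right _ this.1, Finset.mem_union_right _ this.2⟩

end BipGraph

/-- `estar (2*b) = b^2` and `estar (2*b+1) = b*(b+1)`; i.e. `⌊c/2⌋ * ⌈c/2⌉`. -/
def estar (c : ℕ) : ℕ := (c / 2) * ((c + 1) / 2)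

lemma estar_even (b : ℕ) : estar (2*b) = b*b := by
  unfold estar
  have h1 : 2*b/2 = b := by omega
  have h2 : (2*b+1)/2 = b := by omega
  rw [h1, h2]

lemma estar_odd (b : ℕ) : estar (2*b+1) = b*(b+1) := by
  unfold estar
  have h1 : (2*b+1)/2 = b := by omega
  have h2 : (2*b+1+1)/2 = b+1 := by omega
  rw [h1, h2]

lemma estar_mono : Monotone estar := fun a b h =>
  Nat.mul_le_mul (Nat.div_le_div_right h) (Nat.div_le_div_right (by omega))

lemma estar_add_le (a b : ℕ) : estar (a+1) + estar (b+1) ≤ estar (a+b+1) := by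
  obtain ⟨a', ha | ha⟩ := Nat.even_or_odd' a <;> obtain ⟨b', hb | hb⟩ := Nat.even_or_odd' b <;>
    subst ha hb
  · rw [estar_odd a', estar_odd b', show 2*a'+(2*b')+1 = 2*(a'+b')+1 by ring, estar_odd]
    nlinarith
  · rw [estar_odd a', show 2*b'+1+1 = 2*(b'+1) by ring, estar_even,
      show 2*a'+(2*b'+1)+1 = 2*(a'+b'+1) by ring, estar_even]
    nlinarith
  · rw [show 2*a'+1+1 = 2*(a'+1) by ring, estar_even, estar_odd,
      show 2*a'+1+(2*b')+1 = 2*(a'+b'+1) by ring, estar_even]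
    nlinarith
  · rw [show 2*a'+1+1 = 2*(a'+1) by ring, estar_even, show 2*b'+1+1 = 2*(b'+1) by ring,
      estar_even, show 2*a'+1+(2*b'+1)+1 = 2*(a'+b'+1)+1 by ring, estar_odd]
    nlinarith

lemma four_estar_le (n : ℕ) : 4 * estar n ≤ n * n := by
  obtain ⟨b, h | h⟩ := Nat.even_or_odd' n <;> subst h
  · rw [estar_even]; nlinarith
  · rw [estar_odd]; nlinarith

lemma estar_lin {a m : ℕ} (h : a ≤ m) : 4 * estar (a+1) ≤ a * (m+3) := by
  obtain ⟨b, hb | hb⟩ := Nat.even_or_odd' a <;> subst hb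
  · rw [estar_odd]; nlinarith
  · rw [show 2*b+1+1 = 2*(b+1) by ring, estar_even]; nlinarith

lemma mul_le_estar (a b : ℕ) : a * b ≤ estar (a+b) := by
  rcases le_total a b with h | h <;> obtain ⟨n, hn | hn⟩ := Nat.even_or_odd' (a+b)
  · have h2 : estar (a+b) = n*n := by rw [hn, estar_even]
    rw [h2]; nlinarith
  · have h2 : estar (a+b) = n*(n+1) := by rw [hn, estar_odd]
    rw [h2]; nlinarith
  · have h2 : estar (a+b) = n*n := by rw [hn, estar_even]
    rw [h2]; nlinarith
  · have h2 : estar (a+b) = n*(n+1) := by rw [hn, estar_odd]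
    rw [h2]; nlinarith

lemma sum_estar {ι : Type*} [DecidableEq ι] (s : Finset ι) (f : ι → ℕ) :
    ∑ c ∈ s, estar (f c) ≤ estar ((∑ c ∈ s, (f c - 1)) + 1) := by
  induction s using Finset.induction with
  | empty => simp [estar]
  | @insert a s' hx ih =>
    rw [Finset.sum_insert hx, Finset.sum_insert hx]
    rcases Nat.eq_zero_or_pos (f a) with h0 | hpos
    · rw [h0]
      calc estar 0 + ∑ c ∈ s', estar (f c) = ∑ c ∈ s', estar (f c) := by simp [estar]
        _ ≤ estar ((∑ c ∈ s', (f c - 1)) + 1) := ih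
        _ ≤ estar ((0 - 1 + ∑ c ∈ s', (f c - 1)) + 1) := le_of_eq (by norm_num)
    · obtain ⟨b, hb⟩ : ∃ b, f a = b + 1 := ⟨f a - 1, by omega⟩
      calc estar (f a) + ∑ c ∈ s', estar (f c)
          ≤ estar (f a) + estar ((∑ c ∈ s', (f c - 1)) + 1) := by exact Nat.add_le_add_left ih _
        _ ≤ estar ((f a - 1) + (∑ c ∈ s', (f c - 1)) + 1) := by
            rw [hb]; simpa using estar_add_le b (∑ c ∈ s', (f c - 1))
        _ = estar ((f a - 1 + ∑ c ∈ s', (f c - 1)) + 1) := rfl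

lemma arith1 (W l m : ℕ) (h1 : 4 * l ^ 2 ≤ (2 * l + W) * (m + 3))
    (hc : m + W + 4 ≤ 2 * l) (hl : 1 ≤ l) : False := by
  have h1' : 4 * (l:ℤ) ^ 2 ≤ (2 * l + W) * ((m:ℤ) + 3) := by exact_mod_cast h1
  have hc' : (m:ℤ) + W + 4 ≤ 2 * l := by exact_mod_cast hc
  have hl' : (1:ℤ) ≤ l := by exact_mod_cast hl
  have hW0 : (0:ℤ) ≤ (W:ℤ) := Int.natCast_nonneg W
  nlinarith [mul_nonneg (by linarith : (0:ℤ) ≤ 2 * (l:ℤ) + W)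
    (by linarith : (0:ℤ) ≤ 2 * (l:ℤ) - W - 1 - ((m:ℤ) + 3))]

lemma arith2 (W l m d : ℕ) (h3 : 4 * l ^ 2 ≤ (m + 1) * (m + 1) + (d + 1) * (d + 1))
    (hx : m + 2 ≤ 2 * l) (hy : d + 1 ≤ 2 * W + 4) (hl : (W + 3) ^ 2 ≤ l) : False := by
  have h3' : 4 * (l:ℤ) ^ 2 ≤ ((m:ℤ) + 1) * ((m:ℤ) + 1) + ((d:ℤ) + 1) * ((d:ℤ) + 1) := by
    exact_mod_cast h3
  have hx' : (m:ℤ) + 2 ≤ 2 * l := by exact_mod_cast hx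
  have hy' : (d:ℤ) + 1 ≤ 2 * W + 4 := by exact_mod_cast hy
  have hl' : ((W:ℤ) + 3) ^ 2 ≤ l := by exact_mod_cast hl
  have hW0 : (0:ℤ) ≤ (W:ℤ) := Int.natCast_nonneg W
  have hm0 : (0:ℤ) ≤ (m:ℤ) := Int.natCast_nonneg m
  have hd0 : (0:ℤ) ≤ (d:ℤ) := Int.natCast_nonneg d
  nlinarith [mul_nonneg (by linarith : (0:ℤ) ≤ 2 * (l:ℤ) - 1 - ((m:ℤ) + 1))
      (by linarith : (0:ℤ) ≤ 2 * (l:ℤ) - 1 + ((m:ℤ) + 1)),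
    mul_nonneg (by linarith : (0:ℤ) ≤ 2 * (W:ℤ) + 4 - ((d:ℤ) + 1))
      (by linarith : (0:ℤ) ≤ 2 * (W:ℤ) + 4 + ((d:ℤ) + 1))]


/-- if `ℓ ≥ (W+3)²`, `k(A) ≤ 2ℓ + W` and `e(A) ≥ ℓ²`, then some
connected component `B` of `A` (the induced subgraph on the set of vertices
reachable from some vertex `x`) has `e(B) ≥ ℓ² − e*(W+2)` and `v(B) ≤ 2ℓ + W + 1`. -/
theorem big_component {V : Type} [DecidableEq V] (W ℓ : ℕ) (hℓ : (W + 3) ^ 2 ≤ ℓ)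
    (A : BipGraph V) (hk : A.k ≤ 2 * ℓ + W) (he : ℓ ^ 2 ≤ A.e) :
    ∃ (S : Finset V) (x : V) (hx : x ∈ A.verts),
      (∀ y : V, y ∈ S ↔ ∃ hy : y ∈ A.verts, A.graph.Reachable ⟨x, hx⟩ ⟨y, hy⟩) ∧
      ℓ ^ 2 ≤ (A.induce S).e + estar (W + 2) ∧
      (A.induce S).v ≤ 2 * ℓ + W + 1 := by
  classical
  set G := A.graph with hG
  letI : Fintype G.ConnectedComponent := Fintype.ofFinite _
  have hlpos : 1 ≤ ℓ := le_trans (by nlinarith) hℓ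
  -- nonempty edge set
  have hEne : A.E.Nonempty := by
    rw [← Finset.card_pos]
    have : 1 ≤ ℓ ^ 2 := by nlinarith
    exact lt_of_lt_of_le (by omega) he
  have hEverts : ∀ p ∈ A.E, p.1 ∈ A.verts ∧ p.2 ∈ A.verts := by
    intro p hp
    have h := A.E_sub hp; rw [Finset.mem_product] at h
    exact ⟨Finset.mem_union_left _ h.1, Finset.mem_union_right _ h.2⟩
  obtain ⟨p₀, hp₀⟩ := hEne
  set z₀ : {x : V // x ∈ A.verts} := ⟨p₀.1, (hEverts p₀ hp₀).1⟩ with hz₀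
  -- components data
  set T : G.ConnectedComponent → Finset {x : V // x ∈ A.verts} :=
    fun c => Finset.univ.filter (fun z => G.connectedComponentMk z = c) with hT
  set f : G.ConnectedComponent → ℕ := fun c => (T c).card with hf
  set S : G.ConnectedComponent → Finset V := fun c => (T c).image Subtype.val with hS
  have hSsub : ∀ c, S c ⊆ A.verts := by
    intro c y hy
    obtain ⟨z, _, rfl⟩ := Finset.mem_image.mp hy
    exact z.2
  have hmemS : ∀ (y : V) (c : G.ConnectedComponent),
      y ∈ S c ↔ ∃ hy : y ∈ A.verts, G.connectedComponentMk ⟨y, hy⟩ = c := by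
    intro y c
    constructor
    · intro hy
      obtain ⟨z, hz, rfl⟩ := Finset.mem_image.mp hy
      rw [Finset.mem_filter] at hz
      exact ⟨z.2, hz.2⟩
    · rintro ⟨hy, hc⟩
      exact Finset.mem_image.mpr ⟨⟨y, hy⟩, Finset.mem_filter.mpr ⟨Finset.mem_univ _, hc⟩, rfl⟩
  have hfS : ∀ c, (S c).card = f c :=
    fun c => Finset.card_image_of_injective _ Subtype.val_injective
  have hf1 : ∀ c, 1 ≤ f c := by
    intro c
    obtain ⟨z, hz⟩ := Quot.exists_rep c
    have : z ∈ T c := Finset.mem_filter.mpr ⟨Finset.mem_univ _, hz⟩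
    exact Finset.card_pos.mpr ⟨z, this⟩
  have hv_sum : ∑ c : G.ConnectedComponent, f c = A.v := by
    rw [BipGraph.v, ← Fintype.card_coe A.verts, Fintype.card,
      Finset.card_eq_sum_card_fiberwise (f := fun z => G.connectedComponentMk z)
        (t := Finset.univ) (fun x _ => Finset.mem_univ _)]
  have hCC : A.CC = Fintype.card G.ConnectedComponent := by
    rw [BipGraph.CC, Nat.card_eq_fintype_card]
  have hksum : ∑ c : G.ConnectedComponent, (f c - 1) + Fintype.card G.ConnectedComponent
      = A.v := by
    rw [← hv_sum, ← Finset.card_univ, Finset.card_eq_sum_ones, ← Finset.sum_add_distrib]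
    exact Finset.sum_congr rfl fun c _ => by have := hf1 c; omega
  have hkle : ∑ c : G.ConnectedComponent, (f c - 1) ≤ 2 * ℓ + W := by
    have h1 := hk
    rw [BipGraph.k] at h1
    omega
  -- edge decomposition
  have he_ind : ∀ c, (A.induce (S c)).e
      = (A.E.filter (fun p => p.1 ∈ S c ∧ p.2 ∈ S c)).card := by
    intro c
    rw [BipGraph.e, BipGraph.induce]
  have he_sum : A.e = ∑ c : G.ConnectedComponent, (A.induce (S c)).e := by
    rw [BipGraph.e, Finset.card_eq_sum_card_fiberwise
      (f := fun p => if h : p.1 ∈ A.verts then G.connectedComponentMk ⟨p.1, h⟩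
        else G.connectedComponentMk z₀)
      (t := Finset.univ) (fun x _ => Finset.mem_univ _)]
    apply Finset.sum_congr rfl
    intro c _
    rw [he_ind c]
    congr 1
    apply Finset.filter_congr
    intro p hp
    obtain ⟨h1, h2⟩ := hEverts p hp
    have hadj : G.Adj ⟨p.1, h1⟩ ⟨p.2, h2⟩ := Or.inl hp
    have hcc : G.connectedComponentMk ⟨p.1, h1⟩ = G.connectedComponentMk ⟨p.2, h2⟩ :=
      SimpleGraph.ConnectedComponent.connectedComponentMk_eq_of_adj hadj
    rw [dif_pos h1]
    constructor
    · intro hgc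
      exact ⟨(hmemS _ _).mpr ⟨h1, hgc⟩, (hmemS _ _).mpr ⟨h2, by rw [← hcc]; exact hgc⟩⟩
    · rintro ⟨hs1, -⟩
      obtain ⟨hy, hc⟩ := (hmemS _ _).mp hs1
      exact hc
  -- vertex count of components
  have hverts_ind : ∀ c, (A.induce (S c)).verts = S c := by
    intro c
    show (A.L ∩ S c) ∪ (A.R ∩ S c) = S c
    rw [← Finset.union_inter_distrib_right]
    exact Finset.inter_eq_right.mpr (hSsub c)
  have hv_ind : ∀ c, (A.induce (S c)).v = f c := by
    intro c
    rw [BipGraph.v, hverts_ind c, hfS c]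
  -- edge bound per component
  have he_le : ∀ c, (A.induce (S c)).e ≤ estar (f c) := by
    intro c
    have h1 : (A.induce (S c)).E ⊆ (A.L ∩ S c) ×ˢ (A.R ∩ S c) := (A.induce (S c)).E_sub
    have h2 : (A.induce (S c)).e ≤ (A.L ∩ S c).card * (A.R ∩ S c).card := by
      rw [BipGraph.e]
      simpa [Finset.card_product] using Finset.card_le_card h1
    have hdisj : Disjoint (A.L ∩ S c) (A.R ∩ S c) :=
      A.disj.mono Finset.inter_subset_left Finset.inter_subset_left
    have h3 : (A.L ∩ S c).card + (A.R ∩ S c).card = f c := by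
      rw [← Finset.card_union_of_disjoint hdisj, ← Finset.union_inter_distrib_right,
        show A.L ∪ A.R = A.verts from rfl, Finset.inter_eq_right.mpr (hSsub c), hfS c]
    calc (A.induce (S c)).e ≤ (A.L ∩ S c).card * (A.R ∩ S c).card := h2
      _ ≤ estar ((A.L ∩ S c).card + (A.R ∩ S c).card) := mul_le_estar _ _
      _ = estar (f c) := by rw [h3]
  -- max component
  obtain ⟨B, -, hBmax⟩ := Finset.exists_max_image Finset.univ f
    ⟨G.connectedComponentMk z₀, Finset.mem_univ _⟩
  set m : ℕ := f B - 1 with hm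
  set d : ℕ := ∑ c ∈ Finset.univ.erase B, (f c - 1) with hd
  have hfB : f B = m + 1 := by have := hf1 B; omega
  have hmd : m + d = ∑ c : G.ConnectedComponent, (f c - 1) := by
    rw [hm, hd]
    exact Finset.add_sum_erase Finset.univ (fun c => f c - 1) (Finset.mem_univ B)
  have hmdle : m + d ≤ 2 * ℓ + W := hmd ▸ hkle
  have hesplit : A.e = (A.induce (S B)).e + ∑ c ∈ Finset.univ.erase B, (A.induce (S c)).e := by
    rw [he_sum]
    exact (Finset.add_sum_erase Finset.univ (fun c => (A.induce (S c)).e)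
      (Finset.mem_univ B)).symm
  have hout_le : ∑ c ∈ Finset.univ.erase B, (A.induce (S c)).e ≤ estar (d + 1) := by
    calc ∑ c ∈ Finset.univ.erase B, (A.induce (S c)).e
        ≤ ∑ c ∈ Finset.univ.erase B, estar (f c) :=
          Finset.sum_le_sum fun c _ => he_le c
      _ ≤ estar (d + 1) := sum_estar _ _
  by_cases hdW : d ≤ W + 1
  · -- the good case
    obtain ⟨z, hz⟩ := Quot.exists_rep B
    refine ⟨S B, z.1, z.2, ?_, ?_, ?_⟩
    · intro y
      rw [hmemS y B]
      constructor
      · rintro ⟨hy, hc⟩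
        refine ⟨hy, ?_⟩
        apply SimpleGraph.ConnectedComponent.exact
        show G.connectedComponentMk ⟨z.1, z.2⟩ = G.connectedComponentMk ⟨y, hy⟩
        rw [hc]
        exact hz
      · rintro ⟨hy, hr⟩
        refine ⟨hy, ?_⟩
        rw [← hz]
        exact SimpleGraph.ConnectedComponent.sound hr.symm
    · have h1 : estar (d + 1) ≤ estar (W + 2) := estar_mono (by omega)
      have h2 : A.e ≤ (A.induce (S B)).e + estar (W + 2) := by
        rw [hesplit]
        exact Nat.add_le_add_left (le_trans hout_le h1) _
      exact le_trans he h2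
    · rw [hv_ind B, hfB]
      omega
  · -- contradiction case
    exfalso
    have hdge : W + 2 ≤ d := by omega
    by_cases hcase : m + W + 4 ≤ 2 * ℓ
    · -- linear bound case
      have hlin : ∀ c : G.ConnectedComponent, 4 * (A.induce (S c)).e ≤ (f c - 1) * (m + 3) := by
        intro c
        have hle : f c - 1 ≤ m := by
          have := hBmax c (Finset.mem_univ c)
          omega
        have h1 : f c = (f c - 1) + 1 := by have := hf1 c; omega
        calc 4 * (A.induce (S c)).e ≤ 4 * estar (f c) := by
              have := he_le c; omega
          _ = 4 * estar ((f c - 1) + 1) := by rw [← h1]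
          _ ≤ (f c - 1) * (m + 3) := estar_lin hle
      have h4e : 4 * A.e ≤ (m + d) * (m + 3) := by
        calc 4 * A.e = ∑ c : G.ConnectedComponent, 4 * (A.induce (S c)).e := by
              rw [he_sum, Finset.mul_sum]
          _ ≤ ∑ c : G.ConnectedComponent, (f c - 1) * (m + 3) :=
              Finset.sum_le_sum fun c _ => hlin c
          _ = (∑ c : G.ConnectedComponent, (f c - 1)) * (m + 3) := by
              rw [Finset.sum_mul]
          _ = (m + d) * (m + 3) := by rw [hmd]
      have h1 : 4 * ℓ ^ 2 ≤ (2 * ℓ + W) * (m + 3) := by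
        calc 4 * ℓ ^ 2 ≤ 4 * A.e := by omega
          _ ≤ (m + d) * (m + 3) := h4e
          _ ≤ (2 * ℓ + W) * (m + 3) := Nat.mul_le_mul_right _ hmdle
      exact arith1 W ℓ m h1 hcase hlpos
    · -- two big pieces case
      have hmub : m + 1 ≤ 2 * ℓ - 1 := by omega
      have hdub : d + 1 ≤ 2 * W + 4 := by omega
      have h1 : A.e ≤ estar (m + 1) + estar (d + 1) := by
        rw [hesplit]
        have h2 := he_le B
        rw [hfB] at h2
        omega
      have h3 : 4 * ℓ ^ 2 ≤ (m + 1) * (m + 1) + (d + 1) * (d + 1) := by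
        have := four_estar_le (m + 1)
        have := four_estar_le (d + 1)
        omega
      have hx : m + 2 ≤ 2 * ℓ := by omega
      exact arith2 W ℓ m d h3 hx hdub hℓ


end
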